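/- Let 0 < γ < 1 and define ν(ζ₁,ζ₂,τ) = ζ₁² E_γ(−τ^γ) for (ζ₁,ζ₂) ∈ ℝ² with ζ₁ ≠ 0 and τ ≥ 0. Then ν(ζ₁,ζ₂,0) = ζ₁², and for every such (ζ₁,ζ₂) and τ > 0, ν solves the two-dimensional nonlinear time-fractional Fokker–Planck equation D^γ_τ ν = −∂_{ζ₁}((4/ζ₁) ν²) − ∂_{ζ₂}(ζ₂ ν) + ∂²_{ζ₁ζ₁}(ν²) + ∂²_{ζ₁ζ₂} ν + ∂²_{ζ₂ζ₁} ν + ∂²_{ζ₂ζ₂} ν, where D^γ_τ is the Caputo time-fractional derivative. -/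

import Mathlib

open MeasureTheory Real Filter

/-- The Mittag-Leffler function `E_γ(x) = Σ_{n=0}^∞ x^n / Γ(nγ+1)`. -/
noncomputable def mittagLeffler (γ x : ℝ) : ℝ :=
  ∑' n : ℕ, x ^ n / Real.Gamma ((n : ℝ) * γ + 1)

lemma gamma_slope {γ t : ℝ} (hγ : 0 < γ) (ht : 1 < t) :
    Real.Gamma t * (t - 1) ^ γ ≤ Real.Gamma (t + γ) := by
  have h0t : (0:ℝ) < t - 1 := by linarith
  have hts : t - 1 ∈ Set.Ioi (0:ℝ) := h0t
  have htγ : t + γ ∈ Set.Ioi (0:ℝ) := by simp only [Set.mem_Ioi]; linarith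
  have h := Real.convexOn_log_Gamma.slope_mono_adjacent hts htγ
    (by linarith : t - 1 < t) (by linarith : t < t + γ)
  simp only [Function.comp] at h
  have hΓ : Real.Gamma t = (t - 1) * Real.Gamma (t - 1) := by
    have := Real.Gamma_add_one (s := t - 1) h0t.ne'
    rw [sub_add_cancel] at this; exact this
  have hpos1 : 0 < Real.Gamma (t - 1) := Real.Gamma_pos_of_pos h0t
  have hpos2 : 0 < Real.Gamma t := Real.Gamma_pos_of_pos (by linarith)
  have hlog : Real.log (Real.Gamma t) = Real.log (t - 1) + Real.log (Real.Gamma (t - 1)) :=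
    by rw [hΓ, Real.log_mul h0t.ne' hpos1.ne']
  rw [(by ring : t - (t - 1) = (1:ℝ)), (by ring : t + γ - t = γ), div_one] at h
  have h2 : Real.log (t - 1) ≤ (Real.log (Real.Gamma (t + γ)) - Real.log (Real.Gamma t)) / γ := by
    rw [hlog] at h ⊢; linarith
  have h' := (le_div_iff₀ hγ).mp h2
  have h'' : Real.log (Real.Gamma t) + Real.log (t - 1) * γ ≤ Real.log (Real.Gamma (t + γ)) := by
    rw [hlog] at h ⊢; linarith
  calc Real.Gamma t * (t - 1) ^ γ
      = Real.exp (Real.log (Real.Gamma t) + Real.log (t - 1) * γ) := by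
        rw [Real.exp_add, Real.exp_log hpos2, Real.rpow_def_of_pos h0t]
    _ ≤ Real.exp (Real.log (Real.Gamma (t + γ))) := Real.exp_le_exp.mpr h''
    _ = Real.Gamma (t + γ) := Real.exp_log (Real.Gamma_pos_of_pos (by linarith))

lemma summable_aux {γ : ℝ} (hγ : 0 < γ) (x : ℝ) :
    Summable (fun n : ℕ => ((n : ℝ) + 1) * x ^ n / Real.Gamma ((n : ℝ) * γ + 1)) := by
  apply summable_of_ratio_norm_eventually_le (r := 1/2) (by norm_num)
  have htend : Tendsto (fun n : ℕ => ((n : ℝ) * γ) ^ γ) atTop atTop :=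
    (tendsto_rpow_atTop hγ).comp (Tendsto.atTop_mul_const hγ tendsto_natCast_atTop_atTop)
  filter_upwards [htend.eventually_ge_atTop (4 * (|x| + 1)), eventually_ge_atTop 1] with n hn hn1
  have hng : (0:ℝ) < (n : ℝ) * γ := by
    have h1 : (1:ℝ) ≤ (n:ℝ) := by exact_mod_cast hn1
    nlinarith
  have hΓ1 : 0 < Real.Gamma ((n : ℝ) * γ + 1) := Real.Gamma_pos_of_pos (by linarith)
  have hΓ2 : 0 < Real.Gamma (((n:ℝ) * γ + 1) + γ) := Real.Gamma_pos_of_pos (by linarith)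
  have hslope := gamma_slope (t := (n : ℝ) * γ + 1) hγ (by linarith)
  rw [add_sub_cancel_right] at hslope
  have hle : Real.Gamma ((n:ℝ)*γ+1) * (4 * (|x|+1)) ≤ Real.Gamma (((n:ℝ)*γ+1)+γ) :=
    le_trans (mul_le_mul_of_nonneg_left hn hΓ1.le) hslope
  have hcast : ((n + 1 : ℕ) : ℝ) * γ + 1 = ((n:ℝ) * γ + 1) + γ := by push_cast; ring
  simp only [hcast, norm_div, Real.norm_eq_abs]
  rw [abs_of_pos hΓ1, abs_of_pos hΓ2, mul_div_assoc']
  rw [div_le_div_iff₀ hΓ2 hΓ1]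
  have hA : |((↑(n+1):ℝ) + 1) * x ^ (n+1)| = ((n:ℝ)+2) * (|x| * |x|^n) := by
    rw [abs_mul, abs_pow, pow_succ, abs_of_pos (by push_cast; positivity : (0:ℝ) < (↑(n+1):ℝ) + 1)]
    push_cast; ring
  have hB : |((n:ℝ)+1) * x ^ n| = ((n:ℝ)+1) * |x|^n := by
    rw [abs_mul, abs_pow, abs_of_pos (by positivity : (0:ℝ) < (n:ℝ)+1)]
  rw [hA, hB]
  have hP : (0:ℝ) ≤ |x|^n := by positivity
  have hx0 : (0:ℝ) ≤ |x| := abs_nonneg x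
  have hn0 : (0:ℝ) ≤ (n:ℝ) := Nat.cast_nonneg n
  nlinarith [mul_le_mul_of_nonneg_left hle (by positivity : (0:ℝ) ≤ 1/2 * (((n:ℝ)+1) * |x|^n)),
    mul_nonneg (mul_nonneg (mul_nonneg hn0 hx0) hP) hΓ1.le,
    mul_nonneg (mul_nonneg hn0 hP) hΓ1.le, mul_nonneg hP hΓ1.le,
    mul_nonneg (mul_nonneg hx0 hP) hΓ1.le]

lemma summable_ML {γ : ℝ} (hγ : 0 < γ) (x : ℝ) :
    Summable (fun n : ℕ => x ^ n / Real.Gamma ((n : ℝ) * γ + 1)) := by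
  apply Summable.of_norm_bounded (summable_aux hγ |x|)
  intro n
  have hΓ : 0 < Real.Gamma ((n : ℝ) * γ + 1) := Real.Gamma_pos_of_pos (by positivity)
  rw [norm_div, Real.norm_eq_abs, Real.norm_eq_abs, abs_of_pos hΓ, abs_pow]
  apply (div_le_div_iff_of_pos_right hΓ).mpr
  nlinarith [pow_nonneg (abs_nonneg x) n, Nat.cast_nonneg (α := ℝ) n, abs_abs x]

lemma ML_term_hasDerivAt {γ : ℝ} (hγ : 0 < γ) (n : ℕ) {z : ℝ} (hz : 0 < z) :
    HasDerivAt (fun z : ℝ => (-z ^ γ) ^ n / Real.Gamma ((n : ℝ) * γ + 1))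
      ((-1) ^ n * ((n : ℝ) * γ) * z ^ ((n : ℝ) * γ - 1) / Real.Gamma ((n : ℝ) * γ + 1)) z := by
  have hbase : HasDerivAt (fun z : ℝ => z ^ ((n : ℝ) * γ))
      (((n : ℝ) * γ) * z ^ ((n : ℝ) * γ - 1)) z :=
    Real.hasDerivAt_rpow_const (Or.inl hz.ne')
  have h2 : HasDerivAt (fun z : ℝ => (-1 : ℝ) ^ n / Real.Gamma ((n : ℝ) * γ + 1) * z ^ ((n : ℝ) * γ))
      ((-1 : ℝ) ^ n / Real.Gamma ((n : ℝ) * γ + 1) * (((n : ℝ) * γ) * z ^ ((n : ℝ) * γ - 1))) z :=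
    hbase.const_mul _
  have heq : (fun z : ℝ => (-z ^ γ) ^ n / Real.Gamma ((n : ℝ) * γ + 1)) =ᶠ[nhds z]
      (fun z : ℝ => (-1 : ℝ) ^ n / Real.Gamma ((n : ℝ) * γ + 1) * z ^ ((n : ℝ) * γ)) := by
    filter_upwards [eventually_gt_nhds hz] with y hy
    rw [neg_pow, mul_comm ((-1:ℝ)^n), ← Real.rpow_natCast (y ^ γ) n, ← Real.rpow_mul hy.le]
    ring_nf
  have := h2.congr_of_eventuallyEq heq
  refine this.congr_deriv ?_
  ring

set_option maxHeartbeats 1000000 in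
lemma ML_hasDerivAt {γ : ℝ} (hγ : 0 < γ) {ρ : ℝ} (hρ : 0 < ρ) :
    HasDerivAt (fun z : ℝ => mittagLeffler γ (-z ^ γ))
      (∑' n : ℕ, (-1) ^ n * ((n : ℝ) * γ) * ρ ^ ((n : ℝ) * γ - 1) / Real.Gamma ((n : ℝ) * γ + 1))
      ρ := by
  set a : ℝ := (ρ/2) ^ γ with ha
  set b : ℝ := (ρ+1) ^ γ with hb
  set K : ℝ := max a b with hK
  have hρ2 : (0:ℝ) < ρ/2 := by linarith
  have hρ1 : (0:ℝ) < ρ+1 := by linarith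
  have hKa : a ≤ K := le_max_left _ _
  have hKb : b ≤ K := le_max_right _ _
  have hK0 : 0 ≤ K := le_trans (Real.rpow_nonneg hρ2.le γ) hKa
  set C : ℝ := γ * (2/ρ + 1/(ρ+1)) with hC
  set u : ℕ → ℝ := fun n => C * (((n:ℝ)+1) * K ^ n / Real.Gamma ((n:ℝ) * γ + 1)) with hu
  have hsum_u : Summable u := (summable_aux hγ K).mul_left C
  have hbound : ∀ n : ℕ, ∀ y ∈ Set.Ioo (ρ/2) (ρ+1),
      ‖(-1) ^ n * ((n : ℝ) * γ) * y ^ ((n : ℝ) * γ - 1) / Real.Gamma ((n : ℝ) * γ + 1)‖ ≤ u n := by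
    intro n y hy
    have hy0 : 0 < y := lt_trans hρ2 hy.1
    have hΓ : 0 < Real.Gamma ((n : ℝ) * γ + 1) := Real.Gamma_pos_of_pos (by positivity)
    rw [norm_div, Real.norm_eq_abs, Real.norm_eq_abs, abs_of_pos hΓ, abs_mul, abs_mul, abs_pow,
      abs_neg, abs_one, one_pow, one_mul, abs_of_nonneg (by positivity : (0:ℝ) ≤ (n:ℝ)*γ),
      abs_of_nonneg (Real.rpow_nonneg hy0.le _)]
    have hyb : y ^ ((n : ℝ) * γ - 1) ≤ (ρ/2) ^ ((n:ℝ)*γ - 1) + (ρ+1) ^ ((n:ℝ)*γ - 1) := by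
      rcases le_or_gt ((n:ℝ)*γ - 1) 0 with he | he
      · have h1 : y ^ ((n : ℝ) * γ - 1) ≤ (ρ/2) ^ ((n:ℝ)*γ - 1) :=
          Real.rpow_le_rpow_of_nonpos hρ2 hy.1.le he
        have h2 : 0 ≤ (ρ+1) ^ ((n:ℝ)*γ - 1) := Real.rpow_nonneg hρ1.le _
        linarith
      · have h1 : y ^ ((n : ℝ) * γ - 1) ≤ (ρ+1) ^ ((n:ℝ)*γ - 1) :=
          Real.rpow_le_rpow hy0.le hy.2.le he.le
        have h2 : 0 ≤ (ρ/2) ^ ((n:ℝ)*γ - 1) := Real.rpow_nonneg hρ2.le _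
        linarith
    have hrw1 : (ρ/2) ^ ((n:ℝ)*γ - 1) = a ^ n * (2/ρ) := by
      rw [ha, Real.rpow_sub hρ2, Real.rpow_one, ← Real.rpow_natCast ((ρ/2)^γ) n,
        ← Real.rpow_mul hρ2.le]
      rw [mul_comm γ (n:ℝ), div_eq_mul_inv, inv_div]
    have hrw2 : (ρ+1) ^ ((n:ℝ)*γ - 1) = b ^ n * (1/(ρ+1)) := by
      rw [hb, Real.rpow_sub hρ1, Real.rpow_one, ← Real.rpow_natCast ((ρ+1)^γ) n,
        ← Real.rpow_mul hρ1.le, mul_comm γ (n:ℝ), div_eq_mul_inv, one_div]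
    have han : a ^ n ≤ K ^ n := pow_le_pow_left₀ (Real.rpow_nonneg hρ2.le γ) hKa n
    have hbn : b ^ n ≤ K ^ n := pow_le_pow_left₀ (Real.rpow_nonneg hρ1.le γ) hKb n
    have hnγ : (n:ℝ) * γ ≤ ((n:ℝ)+1) * γ := by nlinarith [hγ.le]
    rw [hu]
    have hKn : (0:ℝ) ≤ K ^ n := pow_nonneg hK0 n
    have h2ρ : (0:ℝ) ≤ 2/ρ := by positivity
    have h1ρ : (0:ℝ) ≤ 1/(ρ+1) := by positivity
    have hfinal : (n:ℝ)*γ * y ^ ((n:ℝ)*γ - 1) ≤ C * (((n:ℝ)+1) * K ^ n) := by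
      have hstep : y ^ ((n:ℝ)*γ - 1) ≤ K ^ n * (2/ρ) + K ^ n * (1/(ρ+1)) := by
        rw [hrw1, hrw2] at hyb
        have := mul_le_mul_of_nonneg_right han h2ρ
        have := mul_le_mul_of_nonneg_right hbn h1ρ
        linarith
      have hyn : 0 ≤ y ^ ((n:ℝ)*γ - 1) := Real.rpow_nonneg hy0.le _
      have hn0 : (0:ℝ) ≤ (n:ℝ) := Nat.cast_nonneg n
      rw [hC]
      nlinarith [mul_le_mul_of_nonneg_left hstep (mul_nonneg hn0 hγ.le),
        mul_nonneg (mul_nonneg hγ.le hKn) (add_nonneg h2ρ h1ρ)]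
    rw [div_le_iff₀ hΓ]
    calc (n:ℝ)*γ * y ^ ((n:ℝ)*γ - 1)
        ≤ C * (((n:ℝ)+1) * K ^ n) := hfinal
      _ = C * (((n:ℝ)+1) * K ^ n / Real.Gamma ((n:ℝ)*γ+1)) * Real.Gamma ((n:ℝ)*γ+1) := by
          field_simp
  have hpre : IsPreconnected (Set.Ioo (ρ/2) (ρ+1)) := (convex_Ioo _ _).isPreconnected
  have hmem : ρ ∈ Set.Ioo (ρ/2) (ρ+1) := ⟨by linarith, by linarith⟩
  have hderiv : ∀ n : ℕ, ∀ y ∈ Set.Ioo (ρ/2) (ρ+1),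
      HasDerivAt (fun z : ℝ => (-z ^ γ) ^ n / Real.Gamma ((n : ℝ) * γ + 1))
        ((-1) ^ n * ((n : ℝ) * γ) * y ^ ((n : ℝ) * γ - 1) / Real.Gamma ((n : ℝ) * γ + 1)) y :=
    fun n y hy => ML_term_hasDerivAt hγ n (lt_trans hρ2 hy.1)
  have hsum0 : Summable (fun n : ℕ => (-ρ ^ γ) ^ n / Real.Gamma ((n : ℝ) * γ + 1)) :=
    summable_ML hγ _
  have hml : (fun z : ℝ => mittagLeffler γ (-z ^ γ))
      = fun z : ℝ => ∑' n : ℕ, (-z ^ γ) ^ n / Real.Gamma ((n : ℝ) * γ + 1) := rfl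
  rw [hml]
  exact hasDerivAt_tsum_of_isPreconnected hsum_u isOpen_Ioo hpre hderiv hbound hmem hsum0 hmem

lemma betaIntegrable {a b τ : ℝ} (ha : 0 < a) (hb : 0 < b) (hτ : 0 < τ) :
    IntervalIntegrable (fun ρ : ℝ => ρ ^ (a - 1) * (τ - ρ) ^ (b - 1)) volume 0 τ := by
  have h1 : IntervalIntegrable (fun ρ : ℝ => ρ ^ (a - 1) * (τ - ρ) ^ (b - 1)) volume 0 (τ/2) := by
    apply IntervalIntegrable.mul_continuousOn
    · exact intervalIntegral.intervalIntegrable_rpow' (by linarith)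
    · apply ContinuousOn.rpow_const (by fun_prop)
      intro x hx
      rw [Set.uIcc_of_le (by linarith : (0:ℝ) ≤ τ/2)] at hx
      left; intro h
      have : x = τ := by linarith [sub_eq_zero.mp h]
      linarith [hx.2]
  have h2 : IntervalIntegrable (fun ρ : ℝ => ρ ^ (a - 1) * (τ - ρ) ^ (b - 1)) volume (τ/2) τ := by
    apply IntervalIntegrable.continuousOn_mul
    · -- integrability of (τ - ρ)^(b-1) on τ/2..τ
      have hbase : IntervalIntegrable (fun x : ℝ => x ^ (b - 1)) volume 0 (τ/2) :=
        intervalIntegral.intervalIntegrable_rpow' (by linarith)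
      have h := (hbase.comp_sub_left τ).symm
      have e : τ - τ/2 = τ/2 := by ring
      rw [e] at h
      simpa using h
    · apply ContinuousOn.rpow_const (by fun_prop)
      intro x hx
      rw [Set.uIcc_of_le (by linarith : τ/2 ≤ τ)] at hx
      exact Or.inl (lt_of_lt_of_le (by linarith) hx.1).ne'
  exact h1.trans h2

lemma realBeta {a b τ : ℝ} (ha : 0 < a) (hb : 0 < b) (hτ : 0 < τ) :
    ∫ ρ in (0:ℝ)..τ, ρ ^ (a - 1) * (τ - ρ) ^ (b - 1)
      = τ ^ (a + b - 1) * (Real.Gamma a * Real.Gamma b / Real.Gamma (a + b)) := by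
  have hscaled := Complex.betaIntegral_scaled (a : ℂ) (b : ℂ) hτ
  have hGG := Complex.Gamma_mul_Gamma_eq_betaIntegral
    (s := (a:ℂ)) (t := (b:ℂ)) (by simpa using ha) (by simpa using hb)
  have hΓab : Complex.Gamma ((a:ℂ) + b) ≠ 0 := by
    rw [(by push_cast; rfl : (a:ℂ) + b = ((a+b:ℝ):ℂ)), Complex.Gamma_ofReal]
    exact_mod_cast (Real.Gamma_pos_of_pos (by linarith)).ne'
  have hbeta : Complex.betaIntegral a b
      = Complex.Gamma a * Complex.Gamma b / Complex.Gamma ((a:ℂ) + b) := by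
    rw [hGG, mul_div_cancel_left₀ _ hΓab]
  -- transfer the integral to the reals
  have hint : (∫ ρ in (0:ℝ)..τ, (ρ:ℂ) ^ ((a:ℂ) - 1) * ((τ:ℂ) - ρ) ^ ((b:ℂ) - 1))
      = ((∫ ρ in (0:ℝ)..τ, ρ ^ (a - 1) * (τ - ρ) ^ (b - 1) : ℝ) : ℂ) := by
    rw [intervalIntegral.integral_of_le hτ.le, intervalIntegral.integral_of_le hτ.le]
    have hcongr : (∫ ρ in Set.Ioc (0:ℝ) τ, (ρ:ℂ) ^ ((a:ℂ) - 1) * ((τ:ℂ) - ρ) ^ ((b:ℂ) - 1))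
        = ∫ ρ in Set.Ioc (0:ℝ) τ, ((ρ ^ (a - 1) * (τ - ρ) ^ (b - 1) : ℝ) : ℂ) := by
      apply setIntegral_congr_fun measurableSet_Ioc
      intro ρ hρ
      dsimp only
      have h1 : (ρ:ℂ) ^ ((a:ℂ) - 1) = ((ρ ^ (a-1) : ℝ) : ℂ) := by
        rw [Complex.ofReal_cpow hρ.1.le]; norm_cast
      have h2 : ((τ:ℂ) - ρ) ^ ((b:ℂ) - 1) = (((τ - ρ) ^ (b-1) : ℝ) : ℂ) := by
        rw [(by push_cast; ring : (τ:ℂ) - ρ = ((τ - ρ : ℝ) : ℂ)),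
          Complex.ofReal_cpow (by linarith [hρ.2])]
        norm_cast
      rw [h1, h2]
      norm_cast
    rw [hcongr]
    exact integral_ofReal
  rw [hint, hbeta] at hscaled
  have hrhs : ((τ:ℂ)) ^ ((a:ℂ) + b - 1) *
      (Complex.Gamma a * Complex.Gamma b / Complex.Gamma ((a:ℂ) + b))
      = ((τ ^ (a + b - 1) * (Real.Gamma a * Real.Gamma b / Real.Gamma (a + b)) : ℝ) : ℂ) := by
    rw [(by push_cast; rfl : (a:ℂ) + b - 1 = ((a + b - 1 : ℝ) : ℂ)),
      (by push_cast; rfl : (a:ℂ) + b = ((a+b:ℝ):ℂ)),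
      ← Complex.ofReal_cpow hτ.le, Complex.Gamma_ofReal, Complex.Gamma_ofReal,
      Complex.Gamma_ofReal]
    norm_cast
  rw [hrhs] at hscaled
  exact_mod_cast hscaled

set_option maxHeartbeats 1000000 in
lemma caputo_ML {γ : ℝ} (hγ0 : 0 < γ) (hγ1 : γ < 1) {τ : ℝ} (hτ : 0 < τ) :
    ∫ ρ in (0:ℝ)..τ, deriv (fun ρ : ℝ => mittagLeffler γ (-ρ ^ γ)) ρ * (τ - ρ) ^ (-γ)
      = -Real.Gamma (1 - γ) * mittagLeffler γ (-τ ^ γ) := by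
  have hb : (0:ℝ) < 1 - γ := by linarith
  have hΓpos : ∀ x : ℝ, 0 < x → 0 < Real.Gamma x := fun x hx => Real.Gamma_pos_of_pos hx
  set F : ℕ → ℝ → ℝ := fun n ρ =>
    ((-1) ^ n * ((n : ℝ) * γ) * ρ ^ ((n : ℝ) * γ - 1) / Real.Gamma ((n : ℝ) * γ + 1))
      * (τ - ρ) ^ (-γ) with hF
  set G : ℕ → ℝ → ℝ := fun n ρ => ρ ^ ((n : ℝ) * γ - 1) * (τ - ρ) ^ (-γ) with hG
  have hFG : ∀ n ρ, F n ρ =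
      ((-1) ^ n * ((n : ℝ) * γ) / Real.Gamma ((n : ℝ) * γ + 1)) * G n ρ := by
    intro n ρ; rw [hF, hG]; ring
  -- positivity of n*γ for n = m+1
  have hpos : ∀ m : ℕ, (0:ℝ) < ((m+1 : ℕ) : ℝ) * γ := by
    intro m; push_cast; positivity
  -- integrability of G (m+1)
  have hGint : ∀ m : ℕ, IntegrableOn (G (m+1)) (Set.Ioo 0 τ) volume := by
    intro m
    have h := betaIntegrable (hpos m) hb hτ
    rw [(by ring : (1:ℝ) - γ - 1 = -γ)] at h
    have h2 := (intervalIntegrable_iff_integrableOn_Ioc_of_le hτ.le).mp h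
    exact h2.mono_set Set.Ioo_subset_Ioc_self
  -- value of the integral of G (m+1)
  have hGval : ∀ m : ℕ, ∫ ρ in Set.Ioo (0:ℝ) τ, G (m+1) ρ
      = (τ ^ γ) ^ m * (Real.Gamma (((m+1 : ℕ) : ℝ) * γ) * Real.Gamma (1 - γ)
          / Real.Gamma ((m : ℝ) * γ + 1)) := by
    intro m
    rw [← integral_Ioc_eq_integral_Ioo, ← intervalIntegral.integral_of_le hτ.le]
    have h := realBeta (hpos m) hb hτ
    rw [(by ring : (1:ℝ) - γ - 1 = -γ)] at h
    rw [hG]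
    rw [h]
    rw [(by push_cast; ring : ((m+1 : ℕ) : ℝ) * γ + (1 - γ) - 1 = γ * (m:ℝ)),
      (by push_cast; ring : ((m+1 : ℕ) : ℝ) * γ + (1 - γ) = (m : ℝ) * γ + 1),
      Real.rpow_mul hτ.le, Real.rpow_natCast]
  -- F n is integrable on Ioo 0 τ
  have hFint : ∀ n : ℕ, IntegrableOn (F n) (Set.Ioo 0 τ) volume := by
    intro n
    cases n with
    | zero =>
      have : F 0 = fun _ : ℝ => (0:ℝ) := by
        funext ρ; rw [hF]; push_cast; ring
      rw [this]; exact (integrableOn_const_iff (by simp)).mpr (Or.inl (by simp))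
    | succ m =>
      have hrw : F (m+1) = fun ρ => ((-1) ^ (m+1) * (((m+1:ℕ) : ℝ) * γ)
          / Real.Gamma (((m+1:ℕ) : ℝ) * γ + 1)) * G (m+1) ρ := funext fun ρ => hFG (m+1) ρ
      rw [hrw]
      exact (hGint m).const_mul _
  -- value of the integral of F n
  set H : ℕ → ℝ := fun n => match n with
    | 0 => 0
    | (m+1) => -Real.Gamma (1-γ) * ((-τ ^ γ) ^ m / Real.Gamma ((m : ℝ) * γ + 1)) with hH
  have hFval : ∀ n : ℕ, ∫ ρ in Set.Ioo (0:ℝ) τ, F n ρ = H n := by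
    intro n
    cases n with
    | zero =>
      have : F 0 = fun _ : ℝ => (0:ℝ) := by
        funext ρ; rw [hF]; push_cast; ring
      rw [this]; simp [hH]
    | succ m =>
      have hrw : F (m+1) = fun ρ => ((-1) ^ (m+1) * (((m+1:ℕ) : ℝ) * γ)
          / Real.Gamma (((m+1:ℕ) : ℝ) * γ + 1)) * G (m+1) ρ := funext fun ρ => hFG (m+1) ρ
      rw [hrw, integral_const_mul, hGval m]
      -- algebra
      set N : ℝ := ((m+1:ℕ) : ℝ) * γ with hN
      have hN0 : 0 < N := hpos m
      have hΓN : 0 < Real.Gamma N := hΓpos _ hN0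
      have hΓm : 0 < Real.Gamma ((m:ℝ) * γ + 1) := hΓpos _ (by positivity)
      have hΓN1 : Real.Gamma (N + 1) = N * Real.Gamma N := Real.Gamma_add_one hN0.ne'
      rw [hH]
      show ((-1) ^ (m+1) * N / Real.Gamma (N + 1)) * ((τ ^ γ) ^ m *
          (Real.Gamma N * Real.Gamma (1-γ) / Real.Gamma ((m:ℝ) * γ + 1)))
        = -Real.Gamma (1-γ) * ((-τ ^ γ) ^ m / Real.Gamma ((m : ℝ) * γ + 1))
      rw [hΓN1, neg_pow (τ ^ γ) m, pow_succ]
      field_simp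
  -- norm integrals
  have hDval : ∀ n : ℕ, ∫⁻ ρ in Set.Ioo (0:ℝ) τ, ‖F n ρ‖₊ ∂volume
      ≤ ENNReal.ofReal (Real.Gamma (1-γ) * ((τ ^ γ) ^ (n-1) / Real.Gamma (((n-1:ℕ) : ℝ) * γ + 1))) := by
    intro n
    refine le_trans (le_of_eq (ofReal_integral_norm_eq_lintegral_enorm (hFint n)).symm) ?_
    apply ENNReal.ofReal_le_ofReal
    cases n with
    | zero =>
      have : F 0 = fun _ : ℝ => (0:ℝ) := by
        funext ρ; rw [hF]; push_cast; ring
      rw [this]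
      simp only [norm_zero, integral_zero]
      positivity
    | succ m =>
      have hnorm : ∫ ρ in Set.Ioo (0:ℝ) τ, ‖F (m+1) ρ‖
          = (((m+1:ℕ) : ℝ) * γ / Real.Gamma (((m+1:ℕ) : ℝ) * γ + 1))
            * ∫ ρ in Set.Ioo (0:ℝ) τ, G (m+1) ρ := by
        rw [← integral_const_mul]
        apply setIntegral_congr_fun measurableSet_Ioo
        intro ρ hρ
        have hρ0 : 0 < ρ := hρ.1
        have hτρ : 0 < τ - ρ := by linarith [hρ.2]
        have hΓ : 0 < Real.Gamma (((m+1:ℕ) : ℝ) * γ + 1) := hΓpos _ (by positivity)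
        have hG0 : 0 < G (m+1) ρ := by
          rw [hG]
          exact mul_pos (Real.rpow_pos_of_pos hρ0 _) (Real.rpow_pos_of_pos hτρ _)
        dsimp only
        rw [hFG, norm_mul, Real.norm_eq_abs, Real.norm_eq_abs, abs_of_pos hG0, abs_div,
          abs_mul, abs_pow, abs_neg, abs_one, one_pow, one_mul,
          abs_of_pos (hpos m), abs_of_pos hΓ]
      rw [hnorm, hGval m]
      have hΓN1 : Real.Gamma ((((m+1:ℕ)) : ℝ) * γ + 1)
          = (((m+1:ℕ) : ℝ) * γ) * Real.Gamma ((((m+1:ℕ)) : ℝ) * γ) :=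
        Real.Gamma_add_one (hpos m).ne'
      have hΓN : 0 < Real.Gamma ((((m+1:ℕ)) : ℝ) * γ) := hΓpos _ (hpos m)
      have hΓm : 0 < Real.Gamma ((m:ℝ) * γ + 1) := hΓpos _ (by positivity)
      simp only [Nat.add_sub_cancel]
      apply le_of_eq
      rw [hΓN1]
      field_simp
  -- summability of the bounding sequence
  set D : ℕ → ℝ := fun n => Real.Gamma (1-γ)
      * ((τ ^ γ) ^ (n-1) / Real.Gamma (((n-1:ℕ) : ℝ) * γ + 1)) with hD
  have hDnonneg : ∀ n, 0 ≤ D n := by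
    intro n; rw [hD]
    have h0 := hΓpos _ (show (0:ℝ) < ((n-1:ℕ):ℝ)*γ+1 by positivity)
    have h1 := Real.rpow_pos_of_pos hτ γ
    have h2 := hΓpos _ hb
    positivity
  have hDsum : Summable D := by
    apply (_root_.summable_nat_add_iff 1).mp
    have heq : (fun n : ℕ => D (n+1))
        = fun n : ℕ => Real.Gamma (1-γ) * ((τ^γ)^n / Real.Gamma ((n:ℝ)*γ+1)) := by
      funext n; rw [hD]; simp only [Nat.add_sub_cancel]
    rw [heq]
    exact (summable_ML hγ0 (τ^γ)).mul_left _
  have hmeas : ∀ n : ℕ, AEStronglyMeasurable (F n) (volume.restrict (Set.Ioo (0:ℝ) τ)) :=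
    fun n => (hFint n).aestronglyMeasurable
  have hlint : ∑' n : ℕ, ∫⁻ ρ in Set.Ioo (0:ℝ) τ, ‖F n ρ‖₊ ∂volume ≠ ⊤ := by
    apply ne_top_of_le_ne_top ?_ (ENNReal.tsum_le_tsum (fun n => hDval n))
    rw [← ENNReal.ofReal_tsum_of_nonneg hDnonneg hDsum]
    exact ENNReal.ofReal_ne_top
  rw [intervalIntegral.integral_of_le hτ.le, integral_Ioc_eq_integral_Ioo]
  have hcongr : ∫ ρ in Set.Ioo (0:ℝ) τ,
        deriv (fun ρ : ℝ => mittagLeffler γ (-ρ ^ γ)) ρ * (τ - ρ) ^ (-γ)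
      = ∫ ρ in Set.Ioo (0:ℝ) τ, ∑' n : ℕ, F n ρ := by
    apply setIntegral_congr_fun measurableSet_Ioo
    intro ρ hρ
    dsimp only
    rw [(ML_hasDerivAt hγ0 hρ.1).deriv, ← tsum_mul_right]
  rw [hcongr, integral_tsum hmeas hlint]
  have hsumH : Summable H := by
    apply Summable.of_norm_bounded hDsum
    intro n
    cases n with
    | zero =>
      rw [hH]
      simpa using hDnonneg 0
    | succ m =>
      apply le_of_eq
      rw [hH, hD]
      simp only [Nat.add_sub_cancel]
      rw [Real.norm_eq_abs, abs_mul, abs_neg, abs_div, abs_pow, abs_neg,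
        abs_of_pos (hΓpos _ hb), abs_of_pos (Real.rpow_pos_of_pos hτ γ),
        abs_of_pos (hΓpos _ (by positivity : (0:ℝ) < (m:ℝ)*γ+1))]
  simp only [hFval]
  rw [Summable.tsum_eq_zero_add hsumH]
  have h0 : H 0 = 0 := rfl
  have hsucc : (fun m : ℕ => H (m+1))
      = fun m : ℕ => -Real.Gamma (1-γ) * ((-τ^γ)^m / Real.Gamma ((m:ℝ)*γ+1)) := rfl
  rw [h0, zero_add, hsucc, tsum_mul_left]
  rfl

/-- The function `ν(ζ₁,ζ₂,τ) = ζ₁² E_γ(−τ^γ)` satisfies `ν(ζ₁,ζ₂,0) = ζ₁²` and, for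
`ζ₁ ≠ 0`, solves the two-dimensional nonlinear time-fractional Fokker–Planck equation
`D^γ_τ ν = −∂_{ζ₁}((4/ζ₁)ν²) − ∂_{ζ₂}(ζ₂ν) + ∂²_{ζ₁ζ₁}(ν²) + ∂²_{ζ₁ζ₂}ν + ∂²_{ζ₂ζ₁}ν + ∂²_{ζ₂ζ₂}ν`
for `τ > 0`, where `D^γ_τ` is the Caputo time-fractional derivative. -/
theorem tffpe_example5 (γ : ℝ) (hγ0 : 0 < γ) (hγ1 : γ < 1)
    (ν : ℝ → ℝ → ℝ → ℝ) (hν : ν = fun ζ₁ ζ₂ τ => ζ₁ ^ 2 * mittagLeffler γ (-τ ^ γ)) :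
    (∀ ζ₁ ζ₂ : ℝ, ζ₁ ≠ 0 → ν ζ₁ ζ₂ 0 = ζ₁ ^ 2) ∧
    ∀ (ζ₁ ζ₂ τ : ℝ), ζ₁ ≠ 0 → 0 < τ →
      (1 / Real.Gamma (1 - γ)) *
          (∫ ρ in (0:ℝ)..τ, deriv (fun ρ => ν ζ₁ ζ₂ ρ) ρ * (τ - ρ) ^ (-γ))
        = -(deriv (fun z => 4 / z * (ν z ζ₂ τ) ^ 2) ζ₁)
          - deriv (fun z => z * ν ζ₁ z τ) ζ₂
          + deriv (deriv fun z => (ν z ζ₂ τ) ^ 2) ζ₁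
          + deriv (fun z₁ => deriv (fun z₂ => ν z₁ z₂ τ) ζ₂) ζ₁
          + deriv (fun z₂ => deriv (fun z₁ => ν z₁ z₂ τ) ζ₁) ζ₂
          + deriv (deriv fun z => ν ζ₁ z τ) ζ₂ := by
  subst hν
  have hML0 : mittagLeffler γ (-(0:ℝ) ^ γ) = 1 := by
    rw [Real.zero_rpow hγ0.ne', neg_zero, mittagLeffler, tsum_eq_single 0 ?_]
    · simp [Real.Gamma_one]
    · intro n hn; simp [zero_pow hn]
  constructor
  · intro ζ₁ ζ₂ _
    simp only [hML0, mul_one]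
  intro ζ₁ ζ₂ τ hζ₁ hτ
  set E : ℝ := mittagLeffler γ (-τ ^ γ) with hE
  have hΓ : Real.Gamma (1 - γ) ≠ 0 := (Real.Gamma_pos_of_pos (by linarith)).ne'
  -- LHS
  have hLint : (∫ ρ in (0:ℝ)..τ,
        deriv (fun ρ : ℝ => ζ₁ ^ 2 * mittagLeffler γ (-ρ ^ γ)) ρ * (τ - ρ) ^ (-γ))
      = ζ₁ ^ 2 * ∫ ρ in (0:ℝ)..τ,
          deriv (fun ρ : ℝ => mittagLeffler γ (-ρ ^ γ)) ρ * (τ - ρ) ^ (-γ) := by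
    rw [← intervalIntegral.integral_const_mul,
      intervalIntegral.integral_of_le hτ.le, intervalIntegral.integral_of_le hτ.le,
      integral_Ioc_eq_integral_Ioo, integral_Ioc_eq_integral_Ioo]
    apply setIntegral_congr_fun measurableSet_Ioo
    intro ρ hρ
    dsimp only
    rw [((ML_hasDerivAt hγ0 hρ.1).const_mul (ζ₁ ^ 2 : ℝ)).deriv, (ML_hasDerivAt hγ0 hρ.1).deriv]
    ring
  have hLHS : (1 / Real.Gamma (1 - γ)) *
        (∫ ρ in (0:ℝ)..τ,
          deriv (fun ρ : ℝ => ζ₁ ^ 2 * mittagLeffler γ (-ρ ^ γ)) ρ * (τ - ρ) ^ (-γ))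
      = -(ζ₁ ^ 2 * E) := by
    rw [hLint, caputo_ML hγ0 hγ1 hτ, ← hE]
    field_simp
  -- RHS pieces
  have hR1 : deriv (fun z : ℝ => 4 / z * (z ^ 2 * E) ^ 2) ζ₁ = 12 * E ^ 2 * ζ₁ ^ 2 := by
    have e1 : (fun z : ℝ => 4 / z * (z ^ 2 * E) ^ 2) = fun z : ℝ => 4 * E ^ 2 * z ^ 3 := by
      funext z
      by_cases hz : z = 0
      · simp [hz]
      · field_simp
    rw [e1, ((hasDerivAt_pow 3 ζ₁).const_mul (4 * E ^ 2 : ℝ)).deriv]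
    push_cast; ring
  have hR2 : deriv (fun z : ℝ => z * (ζ₁ ^ 2 * E)) ζ₂ = ζ₁ ^ 2 * E := by
    have := (hasDerivAt_id ζ₂).mul_const (ζ₁ ^ 2 * E)
    simpa using this.deriv
  have hR3 : deriv (deriv fun z : ℝ => (z ^ 2 * E) ^ 2) ζ₁ = 12 * E ^ 2 * ζ₁ ^ 2 := by
    have e3 : (fun z : ℝ => (z ^ 2 * E) ^ 2) = fun z : ℝ => E ^ 2 * z ^ 4 := by
      funext z; ring
    have d3 : (deriv fun z : ℝ => E ^ 2 * z ^ 4) = fun z : ℝ => 4 * E ^ 2 * z ^ 3 := by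
      funext z
      rw [((hasDerivAt_pow 4 z).const_mul (E ^ 2 : ℝ)).deriv]
      push_cast; ring
    rw [e3, d3, ((hasDerivAt_pow 3 ζ₁).const_mul (4 * E ^ 2 : ℝ)).deriv]
    push_cast; ring
  have hR4 : deriv (fun z₁ : ℝ => deriv (fun z₂ : ℝ => z₁ ^ 2 * E) ζ₂) ζ₁ = 0 := by
    simp
  have hR5 : deriv (fun z₂ : ℝ => deriv (fun z₁ : ℝ => z₁ ^ 2 * E) ζ₁) ζ₂ = 0 := by
    simp
  have hR6 : deriv (deriv fun z : ℝ => ζ₁ ^ 2 * E) ζ₂ = 0 := by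
    simp
  rw [hLHS, hR1, hR2, hR3, hR4, hR5, hR6]
  ring
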